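/- Let γ, ξ ∈ ℝ with (γ, ξ) ≠ (0, 0), let σ₁ = !![0, 1; 1, 0] and σ₃ = !![1, 0; 0, −1] be the complex Pauli matrices, and set U := exp(−i • ((ξ/2) • σ₃ + γ • σ₁)). Then the squared modulus of the (0,1) entry of U equals (4γ²/(4γ² + ξ²)) · (sin √(γ² + ξ²/4))²; i.e., the spin-flip transition probability for the rectangular step is P = 4γ²/(4γ²+ξ²) · sin²√(γ²+ξ²/4). -/

import Mathlib

open NormedSpace

attribute [local instance] Matrix.linftyOpNormedAddCommGroup Matrix.linftyOpNormedRing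
  Matrix.linftyOpNormedAlgebra

lemma exp_entry01_aux (A : Matrix (Fin 2) (Fin 2) ℂ) (ω : ℝ) (hω : ω ≠ 0)
    (hA : A ^ 2 = (-((ω : ℂ) ^ 2)) • (1 : Matrix (Fin 2) (Fin 2) ℂ)) :
    (NormedSpace.exp A) 0 1 = (Complex.sin ω / ω) * A 0 1 := by
  have hsum : Summable fun n : ℕ => ((n.factorial : ℂ))⁻¹ • A ^ n := expSeries_summable' A
  have hsum1 : Summable fun n : ℕ => (((n.factorial : ℂ))⁻¹ • A ^ n) 0 :=
    hsum.map (Pi.evalAddMonoidHom _ 0) (continuous_apply 0)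
  have hpow_even : ∀ k : ℕ, A ^ (2 * k)
      = ((-((ω : ℂ) ^ 2)) ^ k) • (1 : Matrix (Fin 2) (Fin 2) ℂ) := by
    intro k; rw [pow_mul, hA, smul_pow, one_pow]
  have hpow_odd : ∀ k : ℕ, A ^ (2 * k + 1) = ((-((ω : ℂ) ^ 2)) ^ k) • A := by
    intro k; rw [pow_succ, hpow_even, smul_mul_assoc, one_mul]
  rw [NormedSpace.exp_eq_tsum (𝕂 := ℂ)]
  beta_reduce
  rw [show (∑' n : ℕ, ((n.factorial : ℂ))⁻¹ • A ^ n) 0 1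
      = ∑' n : ℕ, (((n.factorial : ℂ))⁻¹ • A ^ n) 0 1 from
    (congrFun (tsum_apply hsum) 1).trans (tsum_apply hsum1)]
  set f : ℕ → ℂ := fun n => (((n.factorial : ℂ))⁻¹ • A ^ n) 0 1 with hf
  have hodd : ∀ n : ℕ, f n ≠ 0 → n ∈ Set.range (fun k : ℕ => 2 * k + 1) := by
    intro n hn
    rcases Nat.even_or_odd n with he | ho
    · exfalso
      obtain ⟨k, hk⟩ := he
      apply hn
      rw [hf]
      simp only [hk, ← two_mul, hpow_even k, Matrix.smul_apply, Matrix.smul_apply,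
        Matrix.one_apply]
      norm_num
    · obtain ⟨k, hk⟩ := ho
      exact ⟨k, hk.symm⟩
  have hinj : Function.Injective (fun k : ℕ => 2 * k + 1) := by
    intro a b hab; simp only at hab; omega
  rw [← Function.Injective.tsum_eq hinj hodd]
  have hsin := ((Complex.hasSum_sin (ω : ℂ)).div_const (ω : ℂ)).mul_right (A 0 1)
  rw [← hsin.tsum_eq]
  congr 1
  funext k
  have hωℂ : (ω : ℂ) ≠ 0 := Complex.ofReal_ne_zero.mpr hω
  have hfac : ((2 * k + 1).factorial : ℂ) ≠ 0 :=
    Nat.cast_ne_zero.mpr (Nat.factorial_ne_zero _)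
  simp only [hf, hpow_odd k, Matrix.smul_apply, smul_eq_mul, neg_pow (((ω : ℂ)) ^ 2),
    ← pow_mul]
  field_simp
  ring

/-- Spin-flip transition probability for the rectangular step: with
`U = exp (-i ((ξ/2) σ₃ + γ σ₁))`, the squared modulus of the `(0,1)` entry of `U` equals
`4γ²/(4γ²+ξ²) · sin² √(γ² + ξ²/4)`. -/
theorem rectangular_step_transition_probability (γ ξ : ℝ) (h : (γ, ξ) ≠ (0, 0)) :
    ‖((NormedSpace.exp
            ((-Complex.I) •
              ((ξ / 2) • (!![1, 0; 0, -1] : Matrix (Fin 2) (Fin 2) ℂ) +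
                γ • (!![0, 1; 1, 0] : Matrix (Fin 2) (Fin 2) ℂ)))) 0 1)‖ ^ 2 =
      4 * γ ^ 2 / (4 * γ ^ 2 + ξ ^ 2) *
        Real.sin (Real.sqrt (γ ^ 2 + ξ ^ 2 / 4)) ^ 2 := by
  have hne : γ ≠ 0 ∨ ξ ≠ 0 := by
    by_contra hc
    push_neg at hc
    exact h (by simp [hc.1, hc.2])
  have hpos : 0 < γ ^ 2 + ξ ^ 2 / 4 := by
    rcases hne with hγ | hξ <;> positivity
  set ω : ℝ := Real.sqrt (γ ^ 2 + ξ ^ 2 / 4) with hωdef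
  have hωsq : ω ^ 2 = γ ^ 2 + ξ ^ 2 / 4 := Real.sq_sqrt hpos.le
  have hωpos : 0 < ω := Real.sqrt_pos.mpr hpos
  set A : Matrix (Fin 2) (Fin 2) ℂ :=
    (-Complex.I) •
      ((ξ / 2) • (!![1, 0; 0, -1] : Matrix (Fin 2) (Fin 2) ℂ) +
        γ • (!![0, 1; 1, 0] : Matrix (Fin 2) (Fin 2) ℂ)) with hAdef
  have hA01 : A 0 1 = -Complex.I * γ := by
    simp [hAdef, Matrix.smul_apply, Matrix.add_apply]
  have hA2 : A ^ 2 = (-((ω : ℂ) ^ 2)) • (1 : Matrix (Fin 2) (Fin 2) ℂ) := by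
    have hωℂ : ((ω : ℂ)) ^ 2 = (γ : ℂ) ^ 2 + (ξ : ℂ) ^ 2 / 4 := by
      rw [← Complex.ofReal_pow, hωsq]; push_cast; ring
    ext i j
    fin_cases i <;> fin_cases j <;>
      simp [hAdef, pow_two, Matrix.mul_apply, Fin.sum_univ_two, Matrix.one_apply, hωℂ,
        Complex.ext_iff]  <;>
      ring_nf
  rw [exp_entry01_aux A ω hωpos.ne' hA2, hA01, ← Complex.ofReal_sin]
  rw [norm_mul, norm_div, norm_mul, norm_neg, Complex.norm_I, Complex.norm_real,
    Complex.norm_real, Real.norm_eq_abs, Real.norm_eq_abs, abs_of_pos hωpos, one_mul]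
  rw [mul_pow, div_pow]
  simp only [Complex.norm_real, Real.norm_eq_abs, sq_abs, hωsq]
  field_simp
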